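/- arXiv:1912.03646 — 2 statements merged into one kernel-verified Lean document; each statement's English description precedes it below -/
import Mathlib

section
/- Let M ≥ 2, K ≥ 1 and d ≥ 1, let U : 𝒦 → Matrix 𝒮 𝒮 ℂ be a family of unitary matrices with associated privacy test Π, and let γ := W · (Φ ⊗ ω) · Wᴴ be the M-partite private state built from a density matrix ω on 𝒮. Then every density matrix ρ on 𝒦 × 𝒮 satisfies Re Tr[Π · ρ] ≥ F(γ, ρ). In particular, if F(γ, ρ) ≥ 1 − ε for some ε ∈ [0,1], then ρ passes the γ-privacy test with success probability Re Tr[Π · ρ] ≥ 1 − ε. -/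
open Matrix Kronecker
open scoped ComplexOrder

open scoped Classical in
noncomputable def matSqrt {n : Type*} [Fintype n] [DecidableEq n] (A : Matrix n n ℂ) :
    Matrix n n ℂ :=
  if h : A.PosSemidef then
    (h.1.eigenvectorUnitary : Matrix n n ℂ) *
      Matrix.diagonal ((↑) ∘ (Real.sqrt ·) ∘ h.1.eigenvalues) *
      (star h.1.eigenvectorUnitary : Matrix n n ℂ)
  else 0

noncomputable def rootFidelity {n : Type*} [Fintype n] [DecidableEq n]
    (ρ σ : Matrix n n ℂ) : ℝ :=
  (matSqrt (matSqrt σ * ρ * matSqrt σ)).trace.re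

noncomputable def fidelity {n : Type*} [Fintype n] [DecidableEq n]
    (ρ σ : Matrix n n ℂ) : ℝ :=
  (rootFidelity ρ σ) ^ 2

noncomputable def traceNorm {n : Type*} [Fintype n] [DecidableEq n] (A : Matrix n n ℂ) : ℝ :=
  (matSqrt (Aᴴ * A)).trace.re

/-- The set of attainable type-II error values in hypothesis testing. -/
def testValues {n : Type*} [Fintype n] [DecidableEq n] (ρ σ : Matrix n n ℂ) (ε : ℝ) :
    Set ℝ :=
  { x | ∃ Λ : Matrix n n ℂ, Λ.PosSemidef ∧ (1 - Λ).PosSemidef ∧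
      1 - ε ≤ (Λ * ρ).trace.re ∧ x = (Λ * σ).trace.re }

/-- ε-hypothesis-testing relative entropy. -/
noncomputable def Dh {n : Type*} [Fintype n] [DecidableEq n]
    (ρ σ : Matrix n n ℂ) (ε : ℝ) : ℝ :=
  - Real.logb 2 (sInf (testValues ρ σ ε))

/-- GHZ unit vector. -/
noncomputable def ghz (M K : ℕ) : (Fin M → Fin K) → ℂ :=
  fun f => if ∃ c, ∀ m, f m = c then ((Real.sqrt K : ℂ))⁻¹ else 0

/-- GHZ rank-one projection. -/
noncomputable def ghzProj (M K : ℕ) : Matrix (Fin M → Fin K) (Fin M → Fin K) ℂ :=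
  Matrix.vecMulVec (ghz M K) (star ∘ ghz M K)

/-- The twisting unitary. -/
def twist (M K d : ℕ)
    (U : (Fin M → Fin K) → Matrix (Fin M → Fin d) (Fin M → Fin d) ℂ) :
    Matrix ((Fin M → Fin K) × (Fin M → Fin d)) ((Fin M → Fin K) × (Fin M → Fin d)) ℂ :=
  Matrix.of fun p q => if p.1 = q.1 then U p.1 p.2 q.2 else 0

/-- The privacy test `Π = W (Φ ⊗ 1) Wᴴ`. -/
noncomputable def privacyTest (M K d : ℕ)
    (U : (Fin M → Fin K) → Matrix (Fin M → Fin d) (Fin M → Fin d) ℂ) :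
    Matrix ((Fin M → Fin K) × (Fin M → Fin d)) ((Fin M → Fin K) × (Fin M → Fin d)) ℂ :=
  twist M K d U * (ghzProj M K ⊗ₖ (1 : Matrix (Fin M → Fin d) (Fin M → Fin d) ℂ)) *
    (twist M K d U)ᴴ

/-- The private state `γ = W (Φ ⊗ ω) Wᴴ`. -/
noncomputable def privateState (M K d : ℕ)
    (U : (Fin M → Fin K) → Matrix (Fin M → Fin d) (Fin M → Fin d) ℂ)
    (ω : Matrix (Fin M → Fin d) (Fin M → Fin d) ℂ) :
    Matrix ((Fin M → Fin K) × (Fin M → Fin d)) ((Fin M → Fin K) × (Fin M → Fin d)) ℂ :=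
  twist M K d U * (ghzProj M K ⊗ₖ ω) * (twist M K d U)ᴴ

/-- A vector on `𝒦 × 𝒮` is product across the bipartition `J | Jᶜ` of the parties. -/
def IsProductAcross {M K d : ℕ} (J : Set (Fin M))
    (v : (Fin M → Fin K) × (Fin M → Fin d) → ℂ) : Prop :=
  ∃ (v₁ : ((↥J) → Fin K) × ((↥J) → Fin d) → ℂ)
    (v₂ : ((↥(Jᶜ)) → Fin K) × ((↥(Jᶜ)) → Fin d) → ℂ),
    ∀ (f : Fin M → Fin K) (x : Fin M → Fin d),
      v (f, x) = v₁ (fun m => f m.1, fun m => x m.1) * v₂ (fun m => f m.1, fun m => x m.1)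

/-- Biseparability: a finite convex combination of pure states, each product across
some nontrivial bipartition of the parties. -/
def Biseparable {M K d : ℕ}
    (σ : Matrix ((Fin M → Fin K) × (Fin M → Fin d))
      ((Fin M → Fin K) × (Fin M → Fin d)) ℂ) : Prop :=
  ∃ (N : ℕ) (p : Fin N → ℝ) (w : Fin N → ((Fin M → Fin K) × (Fin M → Fin d)) → ℂ)
    (J : Fin N → Set (Fin M)),
    (∀ t, 0 ≤ p t) ∧ (∑ t, p t = 1) ∧
    (∀ t, ∑ i, ‖w t i‖ ^ 2 = 1) ∧
    (∀ t, J t ≠ ∅ ∧ J t ≠ Set.univ ∧ IsProductAcross (J t) (w t)) ∧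
    σ = ∑ t, (p t : ℂ) • Matrix.vecMulVec (w t) (star ∘ w t)

/-- Partial trace over the second tensor factor. -/
noncomputable def partialTrace₂ {A B : Type*} [Fintype B] (τ : Matrix (A × B) (A × B) ℂ) :
    Matrix A A ℂ :=
  Matrix.of fun a a' => ∑ b, τ (a, b) (a', b)

/-- Matrix logarithm of a Hermitian matrix via the spectral functional calculus. -/
noncomputable def matLog {n : Type*} [Fintype n] [DecidableEq n] (A : Matrix n n ℂ) :
    Matrix n n ℂ :=
  if hA : A.IsHermitian then
    (hA.eigenvectorUnitary : Matrix n n ℂ) *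
      Matrix.diagonal (fun i => (Real.log (hA.eigenvalues i) : ℂ)) *
      (star hA.eigenvectorUnitary : Matrix n n ℂ)
  else 0

namespace Matrix.PosSemidef

noncomputable abbrev sqrt {n : Type*} [Fintype n] [DecidableEq n] {A : Matrix n n ℂ} (h : A.PosSemidef) :
    Matrix n n ℂ :=
  (h.1.eigenvectorUnitary : Matrix n n ℂ) *
    Matrix.diagonal ((↑) ∘ (Real.sqrt ·) ∘ h.1.eigenvalues) *
    (star h.1.eigenvectorUnitary : Matrix n n ℂ)

lemma posSemidef_sqrt {n : Type*} [Fintype n] [DecidableEq n] {A : Matrix n n ℂ}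
    (h : A.PosSemidef) : h.sqrt.PosSemidef := by
  unfold sqrt
  exact (Matrix.posSemidef_diagonal_iff.mpr fun i =>
    Complex.zero_le_real.mpr (Real.sqrt_nonneg _)).mul_mul_conjTranspose_same _

lemma sqrt_mul_self {n : Type*} [Fintype n] [DecidableEq n] {A : Matrix n n ℂ}
    (h : A.PosSemidef) : h.sqrt * h.sqrt = A := by
  unfold sqrt
  have hu : (star h.1.eigenvectorUnitary : Matrix n n ℂ) * (h.1.eigenvectorUnitary : Matrix n n ℂ) = 1 :=
    Unitary.coe_star_mul_self _
  have hs := h.1.spectral_theorem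
  rw [Unitary.conjStarAlgAut_apply] at hs
  calc _ = (h.1.eigenvectorUnitary : Matrix n n ℂ) *
        (Matrix.diagonal ((↑) ∘ (Real.sqrt ·) ∘ h.1.eigenvalues) *
          ((star h.1.eigenvectorUnitary : Matrix n n ℂ) * (h.1.eigenvectorUnitary : Matrix n n ℂ)) *
          Matrix.diagonal ((↑) ∘ (Real.sqrt ·) ∘ h.1.eigenvalues)) *
        (star h.1.eigenvectorUnitary : Matrix n n ℂ) := by simp only [mul_assoc]
    _ = (h.1.eigenvectorUnitary : Matrix n n ℂ) *
        Matrix.diagonal (RCLike.ofReal ∘ h.1.eigenvalues) *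
        (star h.1.eigenvectorUnitary : Matrix n n ℂ) := by
      rw [hu, mul_one, Matrix.diagonal_mul_diagonal]
      congr 3
      funext i
      simp only [Function.comp_apply]
      rw [← Complex.ofReal_mul, Real.mul_self_sqrt (h.eigenvalues_nonneg i)]
      rfl
    _ = A := hs.symm

end Matrix.PosSemidef

lemma Matrix.IsHermitian.star_mul_self_mul_eq_diagonal {n : Type*} [Fintype n] [DecidableEq n]
    {A : Matrix n n ℂ} (hA : A.IsHermitian) :
    star (hA.eigenvectorUnitary : Matrix n n ℂ) * A * (hA.eigenvectorUnitary : Matrix n n ℂ) =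
      Matrix.diagonal (RCLike.ofReal ∘ hA.eigenvalues) := by
  have hu : star (hA.eigenvectorUnitary : Matrix n n ℂ) * (hA.eigenvectorUnitary : Matrix n n ℂ) = 1 :=
    Matrix.mem_unitaryGroup_iff'.mp hA.eigenvectorUnitary.2
  have hs := hA.spectral_theorem
  rw [Unitary.conjStarAlgAut_apply] at hs
  calc _ = star (hA.eigenvectorUnitary : Matrix n n ℂ) *
        ((hA.eigenvectorUnitary : Matrix n n ℂ) * Matrix.diagonal (RCLike.ofReal ∘ hA.eigenvalues) *
          star (hA.eigenvectorUnitary : Matrix n n ℂ)) * (hA.eigenvectorUnitary : Matrix n n ℂ) := by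
        rw [← hs]
    _ = (star (hA.eigenvectorUnitary : Matrix n n ℂ) * (hA.eigenvectorUnitary : Matrix n n ℂ)) *
        Matrix.diagonal (RCLike.ofReal ∘ hA.eigenvalues) *
        (star (hA.eigenvectorUnitary : Matrix n n ℂ) * (hA.eigenvectorUnitary : Matrix n n ℂ)) := by
        simp only [mul_assoc]
    _ = _ := by rw [hu, one_mul, mul_one]

lemma traceRe_star_mul_self {n m : Type*} [Fintype n] [Fintype m] (B : Matrix m n ℂ) :
    ((Bᴴ * B).trace).re = ∑ i, ∑ j, ‖B j i‖ ^ 2 := by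
  have h : ∀ z : ℂ, ((starRingEnd ℂ) z * z).re = ‖z‖ ^ 2 := fun z => by
    rw [mul_comm, Complex.mul_conj]
    simp [Complex.normSq_eq_norm_sq, ← Complex.ofReal_pow]
  simp [Matrix.trace, Matrix.diag, Matrix.mul_apply, Matrix.conjTranspose_apply,
    Complex.re_sum, h]

lemma traceRe_star_mul_self_nonneg {n m : Type*} [Fintype n] [Fintype m] (B : Matrix m n ℂ) :
    0 ≤ ((Bᴴ * B).trace).re := by
  rw [traceRe_star_mul_self]; positivity

lemma re_sum_conj_mul_le {n : Type*} [Fintype n] (a b : n → ℂ) :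
    (∑ j, (starRingEnd ℂ) (a j) * b j).re ≤
      Real.sqrt (∑ j, ‖a j‖ ^ 2) * Real.sqrt (∑ j, ‖b j‖ ^ 2) := by
  calc (∑ j, (starRingEnd ℂ) (a j) * b j).re
      = ∑ j, ((starRingEnd ℂ) (a j) * b j).re := by simp [Complex.re_sum]
    _ ≤ ∑ j, ‖a j‖ * ‖b j‖ := Finset.sum_le_sum fun j _ => by
        calc ((starRingEnd ℂ) (a j) * b j).re ≤ ‖(starRingEnd ℂ) (a j) * b j‖ :=
              Complex.re_le_norm _
          _ = ‖a j‖ * ‖b j‖ := by rw [norm_mul, RCLike.norm_conj]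
    _ ≤ _ := Real.sum_mul_le_sqrt_mul_sqrt _ _ _

set_option maxHeartbeats 2000000 in
lemma fidelity_le_trace_proj {n : Type*} [Fintype n] [DecidableEq n]
    (g r Q : Matrix n n ℂ) (hg : g.PosSemidef) (hr : r.PosSemidef)
    (hgtr : g.trace = 1) (hQH : Qᴴ = Q) (hQ2 : Q * Q = Q) (hgQ : g * Q = g) :
    fidelity g r ≤ (Q * r).trace.re := by
  set sg := hg.sqrt with hsg
  set sr := hr.sqrt with hsr
  have hsgH : sgᴴ = sg := hg.posSemidef_sqrt.1
  have hsrH : srᴴ = sr := hr.posSemidef_sqrt.1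
  have hsg2 : sg * sg = g := hg.sqrt_mul_self
  have hsr2 : sr * sr = r := hr.sqrt_mul_self
  -- sqrt of g absorbs Q
  have hsgQ : sg * Q = sg := by
    have h0 : g * (1 - Q) = 0 := by rw [mul_sub, hgQ, mul_one, sub_self]
    have h1 : (sg * (1 - Q))ᴴ * (sg * (1 - Q)) = 0 := by
      have he : (sg * (1 - Q))ᴴ = (1 - Q) * sg := by
        rw [conjTranspose_mul, hsgH, conjTranspose_sub, conjTranspose_one, hQH]
      rw [he]
      have : (1 - Q) * sg * (sg * (1 - Q)) = (1 - Q) * (g * (1 - Q)) := by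
        rw [← hsg2]; noncomm_ring
      rw [this, h0, mul_zero]
    have h2 : sg * (1 - Q) = 0 := Matrix.conjTranspose_mul_self_eq_zero.mp h1
    rw [mul_sub, mul_one] at h2
    exact (sub_eq_zero.mp h2).symm
  -- the matrix inside the square root
  have hXA : (sg * sr)ᴴ * (sg * sr) = sr * g * sr := by
    rw [conjTranspose_mul, hsgH, hsrH, ← hsg2]; noncomm_ring
  have hA : (sr * g * sr).PosSemidef := hXA ▸ posSemidef_conjTranspose_mul_self _
  set lam := hA.1.eigenvalues with hlam
  set V : Matrix n n ℂ := (hA.1.eigenvectorUnitary : Matrix n n ℂ) with hV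
  have hV1 : V * Vᴴ = 1 := by
    rw [← Matrix.star_eq_conjTranspose]
    exact Matrix.mem_unitaryGroup_iff.mp hA.1.eigenvectorUnitary.2
  have hV2 : Vᴴ * V = 1 := by
    rw [← Matrix.star_eq_conjTranspose]
    exact Matrix.mem_unitaryGroup_iff'.mp hA.1.eigenvectorUnitary.2
  -- fidelity as sum of square roots of eigenvalues
  have hsqrt : matSqrt (sr * g * sr) = hA.sqrt := by
    rw [matSqrt, dif_pos hA]
  have hfid : rootFidelity g r = ∑ i, Real.sqrt (lam i) := by
    have h1 : matSqrt r = sr := by rw [matSqrt, dif_pos hr]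
    rw [rootFidelity, h1, hsqrt]
    unfold Matrix.PosSemidef.sqrt
    rw [Matrix.trace_mul_cycle]
    have h : (star hA.1.eigenvectorUnitary : Matrix n n ℂ) * hA.1.eigenvectorUnitary.1 = 1 :=
      Unitary.coe_star_mul_self _
    rw [h, one_mul, Matrix.trace_diagonal]
    simp [Complex.re_sum]
    rfl
  -- the isometry-like matrices
  set T := sg * sr * V with hT
  have hTH : Tᴴ = Vᴴ * sr * sg := by
    rw [hT, conjTranspose_mul, conjTranspose_mul, hsgH, hsrH, ← mul_assoc]
  have hRC : (RCLike.ofReal : ℝ → ℂ) = Complex.ofReal := rfl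
  have hTT : Tᴴ * T = diagonal (Complex.ofReal ∘ lam) := by
    have hdA : Vᴴ * (sr * g * sr) * V = diagonal (RCLike.ofReal ∘ lam) := by
      rw [hV, ← Matrix.star_eq_conjTranspose]
      exact hA.1.star_mul_self_mul_eq_diagonal
    have e1 : Tᴴ * T = Vᴴ * (sr * g * sr) * V := by
      rw [hTH, hT, ← hsg2]; noncomm_ring
    rw [e1, hdA, hRC]
  set C := Q * sr * V with hC
  have hTC : T = sg * C := by
    have e : sg * C = sg * Q * (sr * V) := by rw [hC]; noncomm_ring
    rw [e, hsgQ, hT, mul_assoc]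
  have hlam0 : ∀ i, 0 ≤ lam i := hA.eigenvalues_nonneg
  have hsne : ∀ i, ¬ lam i = 0 → ((Real.sqrt (lam i) : ℂ) ≠ 0) := fun i h => by
    simpa using Real.sqrt_ne_zero'.mpr (lt_of_le_of_ne (hlam0 i) (Ne.symm h))
  have hlc : ∀ i, ¬ lam i = 0 →
      (lam i : ℂ) = (Real.sqrt (lam i) : ℂ) * (Real.sqrt (lam i) : ℂ) := fun i h => by
    rw [← Complex.ofReal_mul, Real.mul_self_sqrt (hlam0 i)]
  set N := diagonal (fun i => if lam i = 0 then (0:ℂ) else ((Real.sqrt (lam i) : ℂ))⁻¹) with hN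
  set E := diagonal (fun i => if lam i = 0 then (0:ℂ) else 1) with hE
  set Wh := T * N with hWh
  have hNH : Nᴴ = N := by
    rw [hN, diagonal_conjTranspose]
    refine congrArg diagonal (funext fun i => ?_)
    by_cases h : lam i = 0 <;>
      simp [h, Pi.star_apply, Complex.star_def, Complex.conj_ofReal, map_inv₀]
  have hWhT : Whᴴ * T = diagonal (fun i => (Real.sqrt (lam i) : ℂ)) := by
    rw [hWh, conjTranspose_mul, hNH, mul_assoc, hTT, hN, diagonal_mul_diagonal]
    refine congrArg diagonal (funext fun i => ?_)
    simp only [Function.comp_apply]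
    by_cases h : lam i = 0
    · simp [h]
    · simp only [if_neg h]
      rw [hlc i h, inv_mul_cancel_left₀ (hsne i h)]
  have hWW : Whᴴ * Wh = E := by
    rw [hWh, conjTranspose_mul, hNH]
    have e1 : N * Tᴴ * (T * N) = N * (Tᴴ * T) * N := by noncomm_ring
    rw [e1, hTT, hN, hE, diagonal_mul_diagonal, diagonal_mul_diagonal]
    refine congrArg diagonal (funext fun i => ?_)
    simp only [Function.comp_apply]
    by_cases h : lam i = 0
    · simp [h]
    · simp only [if_neg h]
      rw [hlc i h]
      have := hsne i h
      field_simp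
  set P := Wh * Whᴴ with hP
  have hPH : Pᴴ = P := by rw [hP, conjTranspose_mul, conjTranspose_conjTranspose]
  have hNE : N * E = N := by
    rw [hN, hE, diagonal_mul_diagonal]
    refine congrArg diagonal (funext fun i => ?_)
    by_cases h : lam i = 0 <;> simp [h]
  have hWhE : Wh * E = Wh := by rw [hWh, mul_assoc, hNE]
  have hPP : P * P = P := by
    have e1 : P * P = Wh * (Whᴴ * Wh) * Whᴴ := by rw [hP]; noncomm_ring
    rw [e1, hWW, hWhE, hP]
  set G := sg * Wh with hG
  have hdiag : ∀ i, Real.sqrt (lam i) = ((Gᴴ * C) i i).re := by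
    intro i
    have e1 : Gᴴ * C = Whᴴ * T := by
      rw [hG, conjTranspose_mul, hsgH, hTC]; noncomm_ring
    rw [e1, hWhT, diagonal_apply_eq]; simp
  have haux : ∀ i, ((Gᴴ * C) i i).re ≤
      Real.sqrt (∑ j, ‖G j i‖^2) * Real.sqrt (∑ j, ‖C j i‖^2) := by
    intro i
    have e1 : (Gᴴ * C) i i = ∑ j, (starRingEnd ℂ) (G j i) * C j i := by
      simp [Matrix.mul_apply, Matrix.conjTranspose_apply]
    rw [e1]; exact re_sum_conj_mul_le _ _
  have hsum1 : ∑ i, ∑ j, ‖G j i‖^2 = ((Gᴴ * G).trace).re := (traceRe_star_mul_self G).symm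
  have hsum2 : ∑ i, ∑ j, ‖C j i‖^2 = ((Cᴴ * C).trace).re := (traceRe_star_mul_self C).symm
  have hGb : ((Gᴴ * G).trace).re ≤ 1 := by
    have e1 : Gᴴ * G = Whᴴ * g * Wh := by
      rw [hG, conjTranspose_mul, hsgH, ← hsg2]; noncomm_ring
    have e2 : (Whᴴ * g * Wh).trace = (P * g).trace := by
      rw [Matrix.trace_mul_cycle, hP]
    have e3 : ((1 - P) * sg)ᴴ * ((1 - P) * sg) = sg * (1 - P) * sg := by
      rw [conjTranspose_mul, hsgH, conjTranspose_sub, conjTranspose_one, hPH]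
      have h4 : (1 - P) * (1 - P) = 1 - P := by
        have : (1 - P) * (1 - P) = 1 - P - P + P * P := by noncomm_ring
        rw [this, hPP]; noncomm_ring
      calc sg * (1 - P) * ((1 - P) * sg) = sg * ((1 - P) * (1 - P)) * sg := by noncomm_ring
        _ = sg * (1 - P) * sg := by rw [h4]
    have e4 : (sg * (1 - P) * sg).trace = g.trace - (P * g).trace := by
      rw [Matrix.trace_mul_cycle, hsg2, mul_sub, mul_one, Matrix.trace_sub,
        Matrix.trace_mul_comm]
    have e5 : 0 ≤ ((sg * (1 - P) * sg).trace).re := e3 ▸ traceRe_star_mul_self_nonneg _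
    rw [e4] at e5
    rw [e1, e2]
    simp only [Complex.sub_re, hgtr, Complex.one_re] at e5 ⊢
    linarith
  have hCb : ((Cᴴ * C).trace).re = ((Q * r).trace).re := by
    have e1 : Cᴴ * C = Vᴴ * (sr * Q * sr) * V := by
      have eC : Cᴴ = Vᴴ * sr * Q := by
        rw [hC, conjTranspose_mul, conjTranspose_mul, hsrH, hQH, ← mul_assoc]
      calc Cᴴ * C = Vᴴ * (sr * (Q * Q) * sr) * V := by rw [eC, hC]; noncomm_ring
        _ = Vᴴ * (sr * Q * sr) * V := by rw [hQ2]
    have e2 : (Cᴴ * C).trace = (Q * r).trace := by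
      rw [e1, Matrix.trace_mul_comm, ← mul_assoc, hV1, one_mul,
        Matrix.trace_mul_cycle, hsr2, Matrix.trace_mul_comm]
    rw [e2]
  have hroot : rootFidelity g r ≤ Real.sqrt (((Q * r).trace).re) := by
    rw [hfid]
    calc ∑ i, Real.sqrt (lam i)
        ≤ ∑ i, Real.sqrt (∑ j, ‖G j i‖^2) * Real.sqrt (∑ j, ‖C j i‖^2) :=
          Finset.sum_le_sum fun i _ => (hdiag i ▸ haux i)
      _ ≤ Real.sqrt (∑ i, ∑ j, ‖G j i‖^2) * Real.sqrt (∑ i, ∑ j, ‖C j i‖^2) :=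
          Real.sum_sqrt_mul_sqrt_le _ (fun i => by positivity) (fun i => by positivity)
      _ ≤ 1 * Real.sqrt (((Q * r).trace).re) := by
          rw [hsum1, hsum2, hCb]
          have h1 : Real.sqrt (((Gᴴ * G).trace).re) ≤ 1 := by
            calc Real.sqrt (((Gᴴ * G).trace).re) ≤ Real.sqrt 1 := Real.sqrt_le_sqrt hGb
              _ = 1 := Real.sqrt_one
          exact mul_le_mul_of_nonneg_right h1 (Real.sqrt_nonneg _)
      _ = Real.sqrt (((Q * r).trace).re) := one_mul _
  have h0 : 0 ≤ rootFidelity g r := by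
    rw [hfid]; exact Finset.sum_nonneg fun i _ => Real.sqrt_nonneg _
  have ht0 : 0 ≤ ((Q * r).trace).re := hCb ▸ traceRe_star_mul_self_nonneg C
  calc fidelity g r = rootFidelity g r ^ 2 := rfl
    _ ≤ Real.sqrt (((Q * r).trace).re) ^ 2 := pow_le_pow_left₀ h0 hroot 2
    _ = ((Q * r).trace).re := Real.sq_sqrt ht0


section Helpers

lemma kron_conjT {a b : Type*} [Fintype a] [Fintype b] (A : Matrix a a ℂ) (B : Matrix b b ℂ) :
    (A ⊗ₖ B)ᴴ = Aᴴ ⊗ₖ Bᴴ := by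
  ext ⟨i, j⟩ ⟨k, l⟩
  simp [Matrix.conjTranspose_apply, Matrix.kroneckerMap_apply, star_mul']

lemma ghz_inner (M K : ℕ) (hM : 0 < M) (hK : 0 < K) :
    ∑ f, (starRingEnd ℂ) (ghz M K f) * ghz M K f = 1 := by
  classical
  have hKR : (0:ℝ) < (K:ℝ) := by exact_mod_cast hK
  have hterm : ∀ f : Fin M → Fin K, (starRingEnd ℂ) (ghz M K f) * ghz M K f
      = if ∃ c, ∀ m, f m = c then ((Real.sqrt K : ℂ))⁻¹ * ((Real.sqrt K : ℂ))⁻¹ else 0 := by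
    intro f
    rw [ghz]
    by_cases h : ∃ c, ∀ m, f m = c <;> simp [h, map_inv₀, Complex.conj_ofReal]
  rw [Finset.sum_congr rfl (fun f _ => hterm f), ← Finset.sum_filter]
  rw [Finset.sum_const]
  have hcard : (Finset.univ.filter (fun f : Fin M → Fin K => ∃ c, ∀ m, f m = c)).card = K := by
    have himg : Finset.univ.filter (fun f : Fin M → Fin K => ∃ c, ∀ m, f m = c)
        = Finset.univ.image (fun c : Fin K => (fun _ : Fin M => c)) := by
      ext f
      simp only [Finset.mem_filter, Finset.mem_univ, true_and, Finset.mem_image]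
      constructor
      · rintro ⟨c, hc⟩
        exact ⟨c, by funext m; exact (hc m).symm⟩
      · rintro ⟨c, hc⟩
        exact ⟨c, fun m => by rw [← hc]⟩
    rw [himg, Finset.card_image_of_injective _ ?_, Finset.card_univ, Fintype.card_fin]
    intro c c' h
    exact congrFun h ⟨0, hM⟩
  rw [hcard]
  have hs : ((Real.sqrt K : ℂ))⁻¹ * ((Real.sqrt K : ℂ))⁻¹ = ((K : ℂ))⁻¹ := by
    rw [← mul_inv, ← Complex.ofReal_mul, Real.mul_self_sqrt (le_of_lt hKR)]
    simp
  have hKne : (K : ℂ) ≠ 0 := by exact_mod_cast Nat.pos_iff_ne_zero.mp hK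
  rw [hs, nsmul_eq_mul, mul_inv_cancel₀ hKne]

lemma ghzProj_herm (M K : ℕ) : (ghzProj M K)ᴴ = ghzProj M K := by
  ext i j
  simp only [ghzProj, Matrix.conjTranspose_apply, Matrix.vecMulVec_apply, Function.comp_apply,
    star_mul', star_star]
  ring

lemma ghzProj_idem (M K : ℕ) (hM : 0 < M) (hK : 0 < K) :
    ghzProj M K * ghzProj M K = ghzProj M K := by
  ext i j
  rw [Matrix.mul_apply]
  have hterm : ∀ k, ghzProj M K i k * ghzProj M K k j
      = (ghzProj M K i j) * ((starRingEnd ℂ) (ghz M K k) * ghz M K k) := by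
    intro k
    simp only [ghzProj, Matrix.vecMulVec_apply, Function.comp_apply, Complex.star_def]
    ring
  rw [Finset.sum_congr rfl (fun k _ => hterm k), ← Finset.mul_sum, ghz_inner M K hM hK, mul_one]

lemma ghzProj_trace (M K : ℕ) (hM : 0 < M) (hK : 0 < K) : (ghzProj M K).trace = 1 := by
  rw [Matrix.trace]
  have : ∀ i, (ghzProj M K).diag i = (starRingEnd ℂ) (ghz M K i) * ghz M K i := by
    intro i
    simp only [Matrix.diag_apply, ghzProj, Matrix.vecMulVec_apply, Function.comp_apply,
      Complex.star_def]
    ring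
  rw [Finset.sum_congr rfl (fun i _ => this i), ghz_inner M K hM hK]

lemma twist_mul_conjTranspose (M K d : ℕ)
    (U : (Fin M → Fin K) → Matrix (Fin M → Fin d) (Fin M → Fin d) ℂ)
    (hU : ∀ f, U f ∈ Matrix.unitaryGroup (Fin M → Fin d) ℂ) :
    twist M K d U * (twist M K d U)ᴴ = 1 := by
  classical
  ext ⟨f, x⟩ ⟨g, y⟩
  rw [Matrix.mul_apply, Fintype.sum_prod_type]
  by_cases hfg : f = g
  · subst hfg
    have h3 : U f * (U f)ᴴ = 1 := by
      rw [← Matrix.star_eq_conjTranspose]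
      exact Matrix.mem_unitaryGroup_iff.mp (hU f)
    calc ∑ h, ∑ z, twist M K d U (f, x) (h, z) * (twist M K d U)ᴴ (h, z) (f, y)
        = ∑ z, twist M K d U (f, x) (f, z) * (twist M K d U)ᴴ (f, z) (f, y) :=
          Finset.sum_eq_single f
            (fun h _ hne => Finset.sum_eq_zero fun z _ => by
              simp [twist, Matrix.conjTranspose_apply, Ne.symm hne])
            (by simp)
      _ = ∑ z, U f x z * (starRingEnd ℂ) (U f y z) :=
          Finset.sum_congr rfl fun z _ => by
            simp [twist, Matrix.conjTranspose_apply]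
      _ = (U f * (U f)ᴴ) x y := by
          simp [Matrix.mul_apply, Matrix.conjTranspose_apply]
      _ = (1 : Matrix ((Fin M → Fin K) × (Fin M → Fin d)) _ ℂ) (f, x) (f, y) := by
          rw [h3]
          simp [Matrix.one_apply, Prod.ext_iff]
  · have hgf : ¬ g = f := fun h => hfg h.symm
    calc ∑ h, ∑ z, twist M K d U (f, x) (h, z) * (twist M K d U)ᴴ (h, z) (g, y)
        = 0 := Finset.sum_eq_zero fun h _ => Finset.sum_eq_zero fun z _ => by
          by_cases hfh : f = h
          · subst hfh
            simp [twist, Matrix.conjTranspose_apply, hgf]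
          · simp [twist, hfh]
      _ = (1 : Matrix ((Fin M → Fin K) × (Fin M → Fin d)) _ ℂ) (f, x) (g, y) := by
          simp [Matrix.one_apply, Prod.ext_iff, hfg]

end Helpers

/-- Any density matrix passes the `γ`-privacy test with probability at
least the fidelity `F(γ, ρ)`; in particular approximate private states pass with
probability at least `1 - ε`. -/
theorem stmt_2 (M K d : ℕ) (hM : 2 ≤ M) (hK : 1 ≤ K) (hd : 1 ≤ d)
    (U : (Fin M → Fin K) → Matrix (Fin M → Fin d) (Fin M → Fin d) ℂ)
    (hU : ∀ f, U f ∈ Matrix.unitaryGroup (Fin M → Fin d) ℂ)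
    (ω : Matrix (Fin M → Fin d) (Fin M → Fin d) ℂ)
    (hω : ω.PosSemidef) (hωtr : ω.trace = 1)
    (ρ : Matrix ((Fin M → Fin K) × (Fin M → Fin d))
      ((Fin M → Fin K) × (Fin M → Fin d)) ℂ)
    (hρ : ρ.PosSemidef) (hρtr : ρ.trace = 1) :
    fidelity (privateState M K d U ω) ρ ≤ (privacyTest M K d U * ρ).trace.re ∧
    ∀ ε : ℝ, 0 ≤ ε → ε ≤ 1 → 1 - ε ≤ fidelity (privateState M K d U ω) ρ →
      1 - ε ≤ (privacyTest M K d U * ρ).trace.re := by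
  have hM0 : 0 < M := lt_of_lt_of_le two_pos hM
  have hK0 : 0 < K := hK
  set W := twist M K d U with hWdef
  set Φm := ghzProj M K with hΦdef
  have hW1 : W * Wᴴ = 1 := twist_mul_conjTranspose M K d U hU
  have hW2 : Wᴴ * W = 1 := mul_eq_one_comm.mp hW1
  have hΦH : Φmᴴ = Φm := ghzProj_herm M K
  have hΦΦ : Φm * Φm = Φm := ghzProj_idem M K hM0 hK0
  have hΦtr : Φm.trace = 1 := ghzProj_trace M K hM0 hK0
  have hγdef : privateState M K d U ω = W * (Φm ⊗ₖ ω) * Wᴴ := rfl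
  have hQdef : privacyTest M K d U = W * (Φm ⊗ₖ (1 : Matrix (Fin M → Fin d) (Fin M → Fin d) ℂ)) * Wᴴ := rfl
  -- positivity of the private state
  have hkpsd : (Φm ⊗ₖ ω).PosSemidef := by
    have hk : (Φm ⊗ₖ ω) = (Φm ⊗ₖ hω.sqrt)ᴴ * (Φm ⊗ₖ hω.sqrt) := by
      rw [kron_conjT, hΦH, hω.posSemidef_sqrt.1, ← Matrix.mul_kronecker_mul, hΦΦ,
        hω.sqrt_mul_self]
    exact hk ▸ Matrix.posSemidef_conjTranspose_mul_self _
  have hγpsd : (privateState M K d U ω).PosSemidef := by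
    rw [hγdef]
    exact hkpsd.mul_mul_conjTranspose_same W
  have hγtr : (privateState M K d U ω).trace = 1 := by
    rw [hγdef, Matrix.trace_mul_cycle, hW2, one_mul, Matrix.trace_kronecker, hΦtr, hωtr,
      one_mul]
  -- projection properties of the privacy test
  have hQH : (privacyTest M K d U)ᴴ = privacyTest M K d U := by
    rw [hQdef]
    calc (W * (Φm ⊗ₖ 1) * Wᴴ)ᴴ = W * (Φm ⊗ₖ (1 : Matrix (Fin M → Fin d) (Fin M → Fin d) ℂ))ᴴ * Wᴴ := by
          rw [Matrix.conjTranspose_mul, Matrix.conjTranspose_mul,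
            Matrix.conjTranspose_conjTranspose]
          noncomm_ring
      _ = W * (Φm ⊗ₖ 1) * Wᴴ := by rw [kron_conjT, hΦH, Matrix.conjTranspose_one]
  have hQ2 : privacyTest M K d U * privacyTest M K d U = privacyTest M K d U := by
    rw [hQdef]
    calc (W * (Φm ⊗ₖ 1) * Wᴴ) * (W * (Φm ⊗ₖ 1) * Wᴴ)
        = W * ((Φm ⊗ₖ 1) * (Wᴴ * W) * (Φm ⊗ₖ 1)) * Wᴴ := by noncomm_ring
      _ = W * ((Φm ⊗ₖ 1) * (Φm ⊗ₖ 1)) * Wᴴ := by rw [hW2, mul_one]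
      _ = W * (Φm ⊗ₖ 1) * Wᴴ := by
          rw [← Matrix.mul_kronecker_mul, hΦΦ, one_mul]
  have hgQ : privateState M K d U ω * privacyTest M K d U = privateState M K d U ω := by
    rw [hγdef, hQdef]
    calc (W * (Φm ⊗ₖ ω) * Wᴴ) * (W * (Φm ⊗ₖ 1) * Wᴴ)
        = W * ((Φm ⊗ₖ ω) * (Wᴴ * W) * (Φm ⊗ₖ 1)) * Wᴴ := by noncomm_ring
      _ = W * ((Φm ⊗ₖ ω) * (Φm ⊗ₖ 1)) * Wᴴ := by rw [hW2, mul_one]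
      _ = W * (Φm ⊗ₖ ω) * Wᴴ := by
          rw [← Matrix.mul_kronecker_mul, hΦΦ, mul_one]
  have hmain : fidelity (privateState M K d U ω) ρ ≤ (privacyTest M K d U * ρ).trace.re :=
    fidelity_le_trace_proj _ _ _ hγpsd hρ hγtr hQH hQ2 hgQ
  exact ⟨hmain, fun ε _ _ hfe => le_trans hfe hmain⟩
end

section
/- Let ρ and σ be density matrices on Fin n, let λ ∈ ℝ be such that 2^λ • σ − ρ is positive semidefinite, and let ε ∈ [0,1). Then every test Λ with Re Tr[Λ·ρ] ≥ 1 − ε satisfies Re Tr[Λ·σ] ≥ (1 − ε) · 2^(−λ). Consequently D_h^ε(ρ‖σ) ≤ λ + log₂(1/(1 − ε)); this is the relation D_h^ε(ρ‖σ) ≤ D_max(ρ‖σ) + log₂(1/(1−ε)). -/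
open Matrix Kronecker
open scoped ComplexOrder

open scoped MatrixOrder in
lemma trace_mul_psd_nonneg' {n : Type*} [Fintype n] [DecidableEq n]
    {A B : Matrix n n ℂ} (hA : A.PosSemidef) (hB : B.PosSemidef) :
    0 ≤ (A * B).trace := by
  have hs : (CFC.sqrt A).PosSemidef := Matrix.nonneg_iff_posSemidef.mp (CFC.sqrt_nonneg A)
  have h1 : A * B = CFC.sqrt A * (CFC.sqrt A * B) := by
    rw [← mul_assoc, CFC.sqrt_mul_sqrt_self A hA.nonneg]
  rw [h1, Matrix.trace_mul_comm]
  have h2 : CFC.sqrt A * B * CFC.sqrt A = CFC.sqrt A * B * (CFC.sqrt A)ᴴ := by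
    rw [hs.isHermitian.eq]
  rw [mul_assoc, ← mul_assoc, h2]
  have hP : (CFC.sqrt A * B * (CFC.sqrt A)ᴴ).PosSemidef := hB.mul_mul_conjTranspose_same _
  have hd : ∀ i, 0 ≤ (CFC.sqrt A * B * (CFC.sqrt A)ᴴ) i i := fun i => by
    exact hP.diag_nonneg
  exact Finset.sum_nonneg fun i _ => hd i

/-- `D_h^ε(ρ‖σ) ≤ D_max(ρ‖σ) + log₂(1/(1−ε))`, together with the
underlying per-test estimate. -/
theorem stmt_11 (n : ℕ) (ρ σ : Matrix (Fin n) (Fin n) ℂ)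
    (hρ : ρ.PosSemidef) (hρtr : ρ.trace = 1)
    (hσ : σ.PosSemidef) (hσtr : σ.trace = 1)
    (lam : ℝ) (hlam : ((2 : ℝ) ^ lam • σ - ρ).PosSemidef)
    (ε : ℝ) (hε0 : 0 ≤ ε) (hε1 : ε < 1) :
    (∀ Λ : Matrix (Fin n) (Fin n) ℂ, Λ.PosSemidef → (1 - Λ).PosSemidef →
        1 - ε ≤ (Λ * ρ).trace.re →
        (1 - ε) * (2 : ℝ) ^ (-lam) ≤ (Λ * σ).trace.re) ∧
    Dh ρ σ ε ≤ lam + Real.logb 2 (1 / (1 - ε)) := by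
  have h2pos : (0:ℝ) < (2:ℝ) ^ lam := Real.rpow_pos_of_pos (by norm_num) lam
  have h2npos : (0:ℝ) < (2:ℝ) ^ (-lam) := Real.rpow_pos_of_pos (by norm_num) (-lam)
  have hεpos : (0:ℝ) < 1 - ε := by linarith
  have key : ∀ Λ : Matrix (Fin n) (Fin n) ℂ, Λ.PosSemidef → (1 - Λ).PosSemidef →
      1 - ε ≤ (Λ * ρ).trace.re →
      (1 - ε) * (2 : ℝ) ^ (-lam) ≤ (Λ * σ).trace.re := by
    intro Λ hΛ hΛ1 hΛρ
    have h0 := trace_mul_psd_nonneg' hΛ hlam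
    have hre : 0 ≤ (Λ * ((2:ℝ) ^ lam • σ - ρ)).trace.re := (Complex.nonneg_iff.mp h0).1
    have hexp : (Λ * ((2:ℝ) ^ lam • σ - ρ)).trace.re
        = (2:ℝ) ^ lam * (Λ * σ).trace.re - (Λ * ρ).trace.re := by
      rw [Matrix.mul_sub, Matrix.trace_sub, Matrix.mul_smul, Matrix.trace_smul]
      simp [Complex.sub_re, Complex.smul_re]
    rw [hexp] at hre
    have hge : 1 - ε ≤ (2:ℝ) ^ lam * (Λ * σ).trace.re := le_trans hΛρ (by linarith)
    have h2inv : (2:ℝ) ^ (-lam) * (2:ℝ) ^ lam = 1 := by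
      rw [← Real.rpow_add (by norm_num)]; simp
    calc (1 - ε) * (2:ℝ) ^ (-lam) ≤ ((2:ℝ) ^ lam * (Λ * σ).trace.re) * (2:ℝ) ^ (-lam) := by
          exact mul_le_mul_of_nonneg_right hge h2npos.le
      _ = (Λ * σ).trace.re := by
          rw [mul_comm ((2:ℝ)^lam) _, mul_assoc, mul_comm ((2:ℝ)^(-lam)) _] at *
          nlinarith [h2inv]
  refine ⟨key, ?_⟩
  set c : ℝ := (1 - ε) * (2:ℝ) ^ (-lam) with hc
  have hcpos : 0 < c := mul_pos hεpos h2npos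
  have hmem : (1:ℝ) ∈ testValues ρ σ ε := by
    refine ⟨1, Matrix.PosSemidef.one, by simpa using Matrix.PosSemidef.zero, ?_, ?_⟩
    · rw [one_mul, hρtr]; simpa using hε0
    · rw [one_mul, hσtr]; simp
  have hbdd : ∀ x ∈ testValues ρ σ ε, c ≤ x := by
    rintro x ⟨Λ, h1, h2, h3, rfl⟩
    exact key Λ h1 h2 h3
  have hinf : c ≤ sInf (testValues ρ σ ε) :=
    le_csInf ⟨1, hmem⟩ hbdd
  have hinfpos : 0 < sInf (testValues ρ σ ε) := lt_of_lt_of_le hcpos hinf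
  have hlog : Real.logb 2 c ≤ Real.logb 2 (sInf (testValues ρ σ ε)) :=
    Real.logb_le_logb_of_le (by norm_num : (1:ℝ) < 2) hcpos hinf
  have hlogc : Real.logb 2 c = Real.logb 2 (1 - ε) - lam := by
    rw [hc, Real.logb_mul hεpos.ne' h2npos.ne', Real.logb_rpow (by norm_num) (by norm_num)]
    ring
  have hloginv : Real.logb 2 (1 / (1 - ε)) = - Real.logb 2 (1 - ε) := by
    rw [one_div, Real.logb_inv]
  rw [Dh, hloginv]
  have : Real.logb 2 (1 - ε) - lam ≤ Real.logb 2 (sInf (testValues ρ σ ε)) := by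
    rw [← hlogc]; exact hlog
  linarith
end
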